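/- For every k ∈ ℕ and every z > 0, the Bessel polynomial q_k is related to the modified Bessel function of the second kind by exp(-z) · q_k(z) = (2^{1/2 - k} / Γ(k + 1/2)) · z^{k + 1/2} · K_{k+1/2}(z). -/

import Mathlib

open Real MeasureTheory Set Filter Topology

/-- The Bessel polynomial `q_k(z) = ∑_{l=0}^k [C(k,l)/C(2k,l)] (2z)^l / l!`. -/
noncomputable def besselQ (k : ℕ) (z : ℝ) : ℝ :=
  ∑ l ∈ Finset.range (k + 1),
    ((k.choose l : ℝ) / ((2 * k).choose l : ℝ)) * (2 * z) ^ l / (Nat.factorial l : ℝ)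

/-- The modified Bessel function of the second kind,
`K_ν(z) = (1/2) ∫_0^∞ t^{ν-1} exp(-z(t + 1/t)/2) dt`. -/
noncomputable def besselK (ν z : ℝ) : ℝ :=
  (1 / 2) * ∫ t in Set.Ioi (0 : ℝ), t ^ (ν - 1) * Real.exp (-z * (t + 1 / t) / 2)


/-- single-term bound: x^n/n! ≤ exp x, so exp (-x) ≤ n! / x^n -/
lemma exp_neg_le_factorial_div {x : ℝ} (hx : 0 < x) (n : ℕ) :
    Real.exp (-x) ≤ n.factorial / x ^ n := by
  have h1 : x ^ n / n.factorial ≤ Real.exp x := by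
    calc x ^ n / n.factorial ≤ ∑ i ∈ Finset.range (n+1), x ^ i / i.factorial := by
          exact Finset.single_le_sum (f := fun i => x ^ i / (i.factorial : ℝ))
            (fun i _ => by positivity) (Finset.self_mem_range_succ n)
      _ ≤ Real.exp x := Real.sum_le_exp_of_nonneg hx.le _
  rw [Real.exp_neg, le_div_iff₀ (pow_pos hx n), inv_mul_le_iff₀ (Real.exp_pos x)]
  rw [div_le_iff₀ (by positivity : (0:ℝ) < (n.factorial : ℝ))] at h1
  linarith

/-- The Bessel integrand. -/
noncomputable def bF (ν z t : ℝ) : ℝ := t ^ (ν - 1) * Real.exp (-z * (t + 1 / t) / 2)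

lemma bF_contOn (ν z : ℝ) : ContinuousOn (bF ν z) (Set.Ioi 0) := by
  apply ContinuousOn.mul
  · exact continuousOn_id.rpow_const fun x hx => Or.inl (ne_of_gt hx)
  · apply Real.continuous_exp.comp_continuousOn
    apply ContinuousOn.div_const
    apply ContinuousOn.mul continuousOn_const
    exact continuousOn_id.add (continuousOn_const.div continuousOn_id fun x hx => ne_of_gt hx)

lemma bF_measurable (ν z : ℝ) : Measurable (bF ν z) := by
  unfold bF; fun_prop

lemma bF_nonneg (ν z : ℝ) {t : ℝ} (ht : 0 < t) : 0 ≤ bF ν z t := by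
  unfold bF; positivity

lemma bF_integrableOn (ν : ℝ) {z : ℝ} (hz : 0 < z) :
    IntegrableOn (bF ν z) (Set.Ioi 0) := by
  have hmeas : ∀ s : Set ℝ, s ⊆ Set.Ioi 0 → MeasurableSet s →
      AEStronglyMeasurable (bF ν z) (volume.restrict s) :=
    fun s hs hms => ((bF_contOn ν z).mono hs).aestronglyMeasurable hms
  rw [← Set.Ioc_union_Ioi_eq_Ioi (zero_le_one' ℝ), integrableOn_union]
  constructor
  · -- on (0,1]: bounded
    obtain ⟨n, hn⟩ := exists_nat_ge (1 - ν)
    apply Measure.integrableOn_of_bounded (M := n.factorial * (2 / z) ^ n)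
    · exact measure_Ioc_lt_top.ne
    · exact (bF_measurable ν z).aestronglyMeasurable
    · filter_upwards [ae_restrict_mem measurableSet_Ioc] with t ht
      have ht0 : 0 < t := ht.1
      rw [Real.norm_eq_abs, abs_of_nonneg (bF_nonneg ν z ht0)]
      unfold bF
      have h1 : Real.exp (-z * (t + 1 / t) / 2) ≤ Real.exp (-(z / (2 * t))) := by
        apply Real.exp_le_exp.2
        have e1 : -(z / (2 * t)) = -z * (1 / t) / 2 := by
          field_simp
        rw [e1]
        have h4 : 0 < z * t := mul_pos hz ht0
        nlinarith
      have h2 : Real.exp (-(z / (2 * t))) ≤ n.factorial / (z / (2 * t)) ^ n :=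
        exp_neg_le_factorial_div (by positivity) n
      have h3 : (n.factorial : ℝ) / (z / (2 * t)) ^ n = n.factorial * (2 / z) ^ n * t ^ (n : ℝ) := by
        rw [div_pow, div_div_eq_mul_div, div_pow, Real.rpow_natCast]
        field_simp
        ring
      calc t ^ (ν - 1) * Real.exp (-z * (t + 1 / t) / 2)
          ≤ t ^ (ν - 1) * (n.factorial * (2 / z) ^ n * t ^ (n : ℝ)) := by
            apply mul_le_mul_of_nonneg_left _ (Real.rpow_nonneg ht0.le _)
            rw [← h3]; exact h1.trans h2
        _ = n.factorial * (2 / z) ^ n * t ^ (ν - 1 + n) := by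
            rw [Real.rpow_add ht0]; ring
        _ ≤ n.factorial * (2 / z) ^ n * 1 := by
            apply mul_le_mul_of_nonneg_left _ (by positivity)
            apply Real.rpow_le_one ht0.le ht.2
            linarith
        _ = n.factorial * (2 / z) ^ n := mul_one _
  · -- on (1,∞): dominated by C * t^(-2)
    obtain ⟨n, hn⟩ := exists_nat_ge (ν + 1)
    have hint : IntegrableOn (fun t : ℝ => n.factorial * (2 / z) ^ n * t ^ (-2 : ℝ))
        (Set.Ioi 1) := (integrableOn_Ioi_rpow_of_lt (by norm_num) one_pos).const_mul _
    apply hint.integrable.mono (hmeas _ (fun x hx => Set.mem_Ioi.2 (lt_trans one_pos (Set.mem_Ioi.1 hx))) measurableSet_Ioi)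
    filter_upwards [ae_restrict_mem measurableSet_Ioi] with t ht
    have ht1 : (1 : ℝ) < t := ht
    have ht0 : 0 < t := lt_trans one_pos ht1
    rw [Real.norm_eq_abs, abs_of_nonneg (bF_nonneg ν z ht0), Real.norm_eq_abs,
      abs_of_nonneg (by positivity)]
    unfold bF
    have h1 : Real.exp (-z * (t + 1 / t) / 2) ≤ Real.exp (-(z * t / 2)) := by
      apply Real.exp_le_exp.2
      have h4 : 0 < z * (1 / t) := by positivity
      nlinarith
    have h2 : Real.exp (-(z * t / 2)) ≤ n.factorial / (z * t / 2) ^ n :=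
      exp_neg_le_factorial_div (by positivity) n
    have h3 : (n.factorial : ℝ) / (z * t / 2) ^ n = n.factorial * (2 / z) ^ n * t ^ (-(n : ℝ)) := by
      rw [div_pow, mul_pow, div_pow, Real.rpow_neg ht0.le, Real.rpow_natCast]
      field_simp
    calc t ^ (ν - 1) * Real.exp (-z * (t + 1 / t) / 2)
        ≤ t ^ (ν - 1) * (n.factorial * (2 / z) ^ n * t ^ (-(n : ℝ))) := by
          apply mul_le_mul_of_nonneg_left _ (Real.rpow_nonneg ht0.le _)
          rw [← h3]; exact h1.trans h2
      _ = n.factorial * (2 / z) ^ n * t ^ (ν - 1 - n) := by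
          rw [show ν - 1 - n = ν - 1 + -(n : ℝ) by ring, Real.rpow_add ht0]; ring
      _ ≤ n.factorial * (2 / z) ^ n * t ^ (-2 : ℝ) := by
          apply mul_le_mul_of_nonneg_left _ (by positivity)
          exact Real.rpow_le_rpow_of_exponent_le ht1.le (by linarith)


lemma bF_int_symm (ν z : ℝ) :
    ∫ t in Set.Ioi (0:ℝ), bF (-ν) z t = ∫ t in Set.Ioi (0:ℝ), bF ν z t := by
  rw [← MeasureTheory.integral_comp_rpow_Ioi (bF ν z) (p := (-1:ℝ)) (by norm_num)]
  apply setIntegral_congr_fun measurableSet_Ioi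
  intro x hx
  have hx0 : (0:ℝ) < x := hx
  simp only [smul_eq_mul]
  unfold bF
  rw [Real.rpow_neg_one, show ((-1:ℝ) - 1) = (-2:ℝ) by norm_num]
  rw [Real.inv_rpow hx0.le, ← Real.rpow_neg hx0.le, abs_neg, abs_one, one_mul]
  simp only [one_div, inv_inv]
  rw [← mul_assoc, ← Real.rpow_add hx0, show (-2) + -(ν-1) = -ν - 1 by ring, add_comm x⁻¹ x]


/-- the function whose derivative generates the recurrence -/
noncomputable def bG (ν z t : ℝ) : ℝ := t ^ ν * Real.exp (-z * (t + 1 / t) / 2)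

lemma bG_deriv (ν z : ℝ) {x : ℝ} (hx : 0 < x) :
    HasDerivAt (bG ν z)
      (ν * bF ν z x - z / 2 * bF (ν + 1) z x + z / 2 * bF (ν - 1) z x) x := by
  have h1 : HasDerivAt (fun t : ℝ => t ^ ν) (ν * x ^ (ν - 1)) x := by
    simpa using Real.hasDerivAt_rpow_const (x := x) (p := ν) (Or.inl hx.ne')
  have h2 : HasDerivAt (fun t : ℝ => -z * (t + 1 / t) / 2)
      (-z * (1 + -(x ^ 2)⁻¹) / 2) x := by
    have : HasDerivAt (fun t : ℝ => t + 1 / t) (1 + -(x ^ 2)⁻¹) x := by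
      simpa [one_div] using (hasDerivAt_id x).fun_add (hasDerivAt_inv hx.ne')
    exact (this.const_mul (-z)).div_const 2
  have h3 := (h2.exp.const_mul 1).congr_deriv rfl
  have h : HasDerivAt (bG ν z)
      (ν * x ^ (ν - 1) * Real.exp (-z * (x + 1 / x) / 2) +
        x ^ ν * (Real.exp (-z * (x + 1 / x) / 2) * (-z * (1 + -(x ^ 2)⁻¹) / 2))) x :=
    h1.fun_mul h2.exp
  convert h using 1
  unfold bF
  have hx2 : x ^ ν * (x ^ 2)⁻¹ = x ^ (ν - 1 - 1) := by
    rw [show ν - 1 - 1 = ν - (2:ℕ) by push_cast; ring, Real.rpow_sub hx, Real.rpow_natCast]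
    rfl
  have hxv : x ^ ((ν + 1) - 1) = x ^ ν := by norm_num
  rw [hxv, ← hx2]
  ring

lemma bG_tendsto_atTop (ν : ℝ) {z : ℝ} (hz : 0 < z) :
    Tendsto (bG ν z) atTop (𝓝 0) := by
  have hmaj := tendsto_rpow_mul_exp_neg_mul_atTop_nhds_zero ν (z/2) (by positivity)
  apply tendsto_of_tendsto_of_tendsto_of_le_of_le' tendsto_const_nhds hmaj
  · filter_upwards [eventually_gt_atTop (0:ℝ)] with t ht
    unfold bG; positivity
  · filter_upwards [eventually_gt_atTop (0:ℝ)] with t ht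
    unfold bG
    apply mul_le_mul_of_nonneg_left _ (Real.rpow_nonneg ht.le _)
    apply Real.exp_le_exp.2
    have h4 : 0 < z * (1 / t) := by positivity
    nlinarith

lemma bG_tendsto_zero (ν : ℝ) {z : ℝ} (hz : 0 < z) :
    Tendsto (bG ν z) (𝓝[>] (0:ℝ)) (𝓝 0) := by
  have hmaj : Tendsto (fun t : ℝ => (t⁻¹) ^ (-ν) * Real.exp (-(z/2) * t⁻¹)) (𝓝[>] (0:ℝ))
      (𝓝 0) :=
    (tendsto_rpow_mul_exp_neg_mul_atTop_nhds_zero (-ν) (z/2) (by positivity)).comp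
      tendsto_inv_nhdsGT_zero
  apply tendsto_of_tendsto_of_tendsto_of_le_of_le' tendsto_const_nhds hmaj
  · filter_upwards [self_mem_nhdsWithin] with t ht
    have ht0 : (0:ℝ) < t := ht
    unfold bG; positivity
  · filter_upwards [self_mem_nhdsWithin] with t ht
    have ht0 : (0:ℝ) < t := ht
    unfold bG
    rw [Real.inv_rpow ht0.le, ← Real.rpow_neg ht0.le, neg_neg]
    apply mul_le_mul_of_nonneg_left _ (Real.rpow_nonneg ht0.le _)
    apply Real.exp_le_exp.2
    rw [show -(z/2) * t⁻¹ = -z * (1/t)/2 by rw [one_div]; ring]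
    have h4 : 0 < z * t := by positivity
    nlinarith

lemma bF_int_rec (ν : ℝ) {z : ℝ} (hz : 0 < z) :
    ∫ t in Set.Ioi (0:ℝ), bF (ν+1) z t
      = (∫ t in Set.Ioi (0:ℝ), bF (ν-1) z t) + (2*ν/z) * ∫ t in Set.Ioi (0:ℝ), bF ν z t := by
  set D : ℝ → ℝ := fun t => ν * bF ν z t - z / 2 * bF (ν + 1) z t + z / 2 * bF (ν - 1) z t
    with hD
  have hDint : IntegrableOn D (Set.Ioi 0) :=
    (((bF_integrableOn ν hz).const_mul ν).sub
      ((bF_integrableOn (ν+1) hz).const_mul (z/2))).add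
      ((bF_integrableOn (ν-1) hz).const_mul (z/2))
  have step1 : ∀ a : ℝ, 0 < a → ∫ t in Set.Ioi a, D t = 0 - bG ν z a := by
    intro a ha
    apply integral_Ioi_of_hasDerivAt_of_tendsto
      ((bG_deriv ν z ha).continuousAt.continuousWithinAt)
      (fun x hx => bG_deriv ν z (lt_trans ha hx))
      (hDint.mono_set (Set.Ioi_subset_Ioi ha.le))
      (bG_tendsto_atTop ν hz)
  have hseq : Tendsto (fun n : ℕ => ((n:ℝ)+1)⁻¹) atTop (𝓝[>] (0:ℝ)) := by
    rw [tendsto_nhdsWithin_iff]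
    constructor
    · exact tendsto_one_div_add_atTop_nhds_zero_nat.congr (fun n => by rw [one_div])
    · filter_upwards with n
      have : (0:ℝ) < ((n:ℝ)+1)⁻¹ := by positivity
      exact Set.mem_Ioi.2 this
  have step2 : Tendsto (fun n : ℕ => ∫ t in Set.Ioi (((n:ℝ)+1)⁻¹), D t) atTop
      (𝓝 (∫ t in Set.Ioi (0:ℝ), D t)) := by
    have hmono : Monotone (fun n : ℕ => Set.Ioi (((n:ℝ)+1)⁻¹)) := by
      intro n m hnm
      apply Set.Ioi_subset_Ioi
      gcongr
    have hunion : (⋃ n : ℕ, Set.Ioi (((n:ℝ)+1)⁻¹)) = Set.Ioi (0:ℝ) := by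
      ext x
      simp only [Set.mem_iUnion, Set.mem_Ioi]
      constructor
      · rintro ⟨n, hn⟩
        exact lt_trans (by positivity) hn
      · intro hx
        obtain ⟨n, hn⟩ := exists_nat_gt x⁻¹
        refine ⟨n, ?_⟩
        have hx' : (0:ℝ) < x⁻¹ := inv_pos.2 hx
        rw [← inv_inv x, inv_lt_inv₀ (by positivity) hx']
        linarith
    have := tendsto_setIntegral_of_monotone (fun n => measurableSet_Ioi) hmono
      (hunion ▸ hDint)
    rwa [hunion] at this
  have step3 : Tendsto (fun n : ℕ => 0 - bG ν z (((n:ℝ)+1)⁻¹)) atTop (𝓝 (0 - 0)) :=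
    Tendsto.sub tendsto_const_nhds ((bG_tendsto_zero ν hz).comp hseq)
  have key : ∫ t in Set.Ioi (0:ℝ), D t = 0 := by
    have h1 : Tendsto (fun n : ℕ => ∫ t in Set.Ioi (((n:ℝ)+1)⁻¹), D t) atTop (𝓝 (0-0)) := by
      apply step3.congr
      intro n
      exact (step1 _ (by positivity)).symm
    have := tendsto_nhds_unique step2 h1
    simpa using this
  have expand : ∫ t in Set.Ioi (0:ℝ), D t
      = ν * (∫ t in Set.Ioi (0:ℝ), bF ν z t)
        - z/2 * (∫ t in Set.Ioi (0:ℝ), bF (ν+1) z t)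
        + z/2 * (∫ t in Set.Ioi (0:ℝ), bF (ν-1) z t) := by
    have I1 : Integrable (fun t => ν * bF ν z t) (volume.restrict (Set.Ioi 0)) :=
      (bF_integrableOn ν hz).const_mul ν
    have I2 : Integrable (fun t => z/2 * bF (ν+1) z t) (volume.restrict (Set.Ioi 0)) :=
      (bF_integrableOn (ν+1) hz).const_mul (z/2)
    have I3 : Integrable (fun t => z/2 * bF (ν-1) z t) (volume.restrict (Set.Ioi 0)) :=
      (bF_integrableOn (ν-1) hz).const_mul (z/2)
    have I12 : Integrable (fun t => ν * bF ν z t - z/2 * bF (ν+1) z t)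
        (volume.restrict (Set.Ioi 0)) := I1.sub I2
    have hDeq : (∫ t in Set.Ioi (0:ℝ), D t)
        = ∫ t in Set.Ioi (0:ℝ),
            ((ν * bF ν z t - z/2 * bF (ν+1) z t) + z/2 * bF (ν-1) z t) := rfl
    rw [hDeq, integral_add I12 I3, integral_sub I1 I2,
      MeasureTheory.integral_const_mul, MeasureTheory.integral_const_mul,
      MeasureTheory.integral_const_mul]
  rw [expand] at key
  have hz' : z ≠ 0 := hz.ne'
  field_simp at key ⊢
  linarith


/-- Glasser / Cauchy–Schlömilch: for the Gaussian `h v = exp (-(z/2) v²)`,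
`∫_{(0,∞)} h (x - 1/x) dx = (1/2) ∫_ℝ h`. -/
lemma glasser {z : ℝ} (hz : 0 < z) :
    (∫ x in Set.Ioi (0:ℝ), Real.exp (-(z/2) * (x - 1/x)^2))
      = (1/2) * ∫ v : ℝ, Real.exp (-(z/2) * v^2) := by
  set h : ℝ → ℝ := fun v => Real.exp (-(z/2) * v^2) with hh
  set φ : ℝ → ℝ := fun x => x - 1/x with hφ
  have hderiv : ∀ x ∈ Set.Ioi (0:ℝ), HasDerivWithinAt φ (1 + (x^2)⁻¹) (Set.Ioi 0) x := by
    intro x hx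
    have hx0 : (0:ℝ) < x := hx
    have : HasDerivAt φ (1 + (x^2)⁻¹) x := by
      have h1 : HasDerivAt (fun t : ℝ => t - t⁻¹) (1 - -(x^2)⁻¹) x :=
        (hasDerivAt_id x).sub (hasDerivAt_inv hx0.ne')
      simpa [hφ, one_div, sub_neg_eq_add] using h1
    exact this.hasDerivWithinAt
  have hinj : Set.InjOn φ (Set.Ioi 0) := by
    apply StrictMonoOn.injOn
    intro x hx y hy hxy
    have hx0 : (0:ℝ) < x := hx
    have hy0 : (0:ℝ) < y := hy
    have : 1 / y < 1 / x := one_div_lt_one_div_of_lt hx0 hxy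
    simp only [hφ]
    linarith
  have himg : φ '' Set.Ioi 0 = Set.univ := by
    apply Set.eq_univ_of_forall
    intro v
    set s : ℝ := Real.sqrt (v^2 + 4) with hs
    have hs2 : s^2 = v^2 + 4 := Real.sq_sqrt (by positivity)
    have hsv : |v| < s := by
      have h1 : |v| = Real.sqrt (v^2) := (Real.sqrt_sq_eq_abs v).symm
      rw [h1, hs]
      apply Real.sqrt_lt_sqrt (sq_nonneg v)
      linarith
    have hx0 : (0:ℝ) < (v + s)/2 := by
      have := neg_abs_le v
      have := hsv
      cases abs_cases v with
      | inl h => linarith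
      | inr h => linarith
    refine ⟨(v + s)/2, hx0, ?_⟩
    have hxs : ((v + s)/2) * ((s - v)/2) = 1 := by
      have : (v+s) * (s-v) = s^2 - v^2 := by ring
      field_simp
      nlinarith
    have hinv : 1 / ((v + s)/2) = (s - v)/2 := (eq_one_div_of_mul_eq_one_left (by rw [mul_comm]; exact hxs)).symm
    simp only [hφ, hinv]
    ring
  have hgauss : Integrable h := by
    simpa [hh] using integrable_exp_neg_mul_sq (by positivity : (0:ℝ) < z/2)
  -- change of variables
  have hcv := MeasureTheory.integral_image_eq_integral_abs_deriv_smul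
    measurableSet_Ioi hderiv hinj h
  rw [himg] at hcv
  rw [MeasureTheory.Measure.restrict_univ] at hcv
  -- integrability of the pulled-back function
  have hW : IntegrableOn (fun x => |1 + (x^2)⁻¹| • h (φ x)) (Set.Ioi 0) := by
    rw [← MeasureTheory.integrableOn_image_iff_integrableOn_abs_deriv_smul
      measurableSet_Ioi hderiv hinj h, himg]
    exact hgauss.integrableOn
  -- h ∘ φ is integrable on Ioi 0
  have hφmeas : Measurable (fun x : ℝ => h (φ x)) := by
    simp only [hh, hφ]; fun_prop
  have hcomp : IntegrableOn (fun x => h (φ x)) (Set.Ioi 0) := by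
    apply Integrable.mono' ((integrable_exp_neg_mul_sq
      (by positivity : (0:ℝ) < z/2)).const_mul (Real.exp z)).integrableOn
      hφmeas.aestronglyMeasurable
    filter_upwards [ae_restrict_mem measurableSet_Ioi] with x hx
    have hx0 : (0:ℝ) < x := hx
    rw [Real.norm_eq_abs, abs_of_nonneg (Real.exp_nonneg _)]
    simp only [hh, hφ, ← Real.exp_add]
    apply Real.exp_le_exp.2
    have hq : (x - 1/x)^2 = x^2 - 2 + (1/x)^2 := by field_simp; ring
    nlinarith [sq_nonneg (1/x), sq_nonneg x]
  -- the second piece equals the first by x ↦ 1/x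
  have hswap : (∫ x in Set.Ioi (0:ℝ), (x^2)⁻¹ * h (φ x))
      = ∫ x in Set.Ioi (0:ℝ), h (φ x) := by
    rw [← MeasureTheory.integral_comp_rpow_Ioi (fun x => h (φ x)) (p := (-1:ℝ)) (by norm_num)]
    apply setIntegral_congr_fun measurableSet_Ioi
    intro x hx
    have hx0 : (0:ℝ) < x := hx
    simp only [smul_eq_mul, abs_neg, abs_one, one_mul]
    rw [Real.rpow_neg_one, show ((-1:ℝ) - 1) = (-2:ℝ) by norm_num]
    have hr2 : x ^ (-2:ℝ) = (x^2)⁻¹ := by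
      rw [show (-2:ℝ) = -((2:ℕ):ℝ) by norm_num, Real.rpow_neg hx0.le, Real.rpow_natCast]
    have hφx : φ (x⁻¹) = -(φ x) := by
      simp only [hφ, one_div, inv_inv]; ring
    rw [hr2, hφx]
    simp only [hh, neg_sq]
  -- integrability of the second piece
  have hWsub : IntegrableOn (fun x => |1 + (x^2)⁻¹| • h (φ x) - h (φ x)) (Set.Ioi 0) :=
    hW.sub hcomp
  have hpiece : IntegrableOn (fun x => (x^2)⁻¹ * h (φ x)) (Set.Ioi 0) := by
    apply hWsub.congr_fun _ measurableSet_Ioi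
    intro x hx
    have hx0 : (0:ℝ) < x := hx
    dsimp only
    rw [abs_of_pos (by positivity : (0:ℝ) < 1 + (x^2)⁻¹), smul_eq_mul]
    ring
  have hfinal : (∫ x in Set.Ioi (0:ℝ), |1 + (x^2)⁻¹| • h (φ x))
      = (∫ x in Set.Ioi (0:ℝ), h (φ x)) + ∫ x in Set.Ioi (0:ℝ), (x^2)⁻¹ * h (φ x) := by
    rw [← MeasureTheory.integral_add hcomp hpiece]
    apply setIntegral_congr_fun measurableSet_Ioi
    intro x hx
    have hx0 : (0:ℝ) < x := hx
    dsimp only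
    rw [abs_of_pos (by positivity : (0:ℝ) < 1 + (x^2)⁻¹), smul_eq_mul]
    ring
  have hmain : (∫ v : ℝ, h v) = 2 * ∫ x in Set.Ioi (0:ℝ), h (φ x) := by
    rw [hcv, hfinal, hswap]; ring
  have hLHS : (∫ x in Set.Ioi (0:ℝ), Real.exp (-(z/2) * (x - 1/x)^2))
      = ∫ x in Set.Ioi (0:ℝ), h (φ x) := rfl
  rw [hLHS]
  have hRHS : (∫ v : ℝ, Real.exp (-(z/2) * v^2)) = ∫ v : ℝ, h v := rfl
  rw [hRHS, hmain]
  ring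

lemma bF_int_half {z : ℝ} (hz : 0 < z) :
    ∫ t in Set.Ioi (0:ℝ), bF (1/2) z t = Real.sqrt (2 * π / z) * Real.exp (-z) := by
  rw [← MeasureTheory.integral_comp_rpow_Ioi_of_pos (g := bF (1/2) z) two_pos]
  have hcong : ∀ x ∈ Set.Ioi (0:ℝ),
      ((2:ℝ) * x ^ ((2:ℝ) - 1)) • bF (1/2) z (x ^ (2:ℝ))
        = (2 * Real.exp (-z)) * Real.exp (-(z/2) * (x - 1/x)^2) := by
    intro x hx
    have hx0 : (0:ℝ) < x := hx
    have hu0 : (0:ℝ) < x ^ (2:ℝ) := Real.rpow_pos_of_pos hx0 _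
    unfold bF
    have h1 : (x ^ (2:ℝ)) ^ ((1:ℝ)/2 - 1) = x⁻¹ := by
      rw [← Real.rpow_mul hx0.le]
      norm_num
      exact Real.rpow_neg_one x
    have h2 : x ^ (2:ℝ) = x^2 := by
      rw [← Real.rpow_natCast x 2]; norm_num
    have h3 : -z * (x^2 + 1/x^2)/2 = -z + (-(z/2) * (x - 1/x)^2) := by
      field_simp
      ring
    rw [show (2:ℝ) - 1 = 1 by norm_num, Real.rpow_one, h1, smul_eq_mul, h2, h3,
      Real.exp_add]
    field_simp
  rw [setIntegral_congr_fun measurableSet_Ioi hcong, MeasureTheory.integral_const_mul,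
    glasser hz, integral_gaussian]
  rw [show π / (z/2) = 2 * π / z by field_simp]
  ring


lemma coeff_id (k l : ℕ) (hl : l ≤ k) :
    ((k+2).choose (l+2) : ℝ) / (((2*k+4).choose (l+2) : ℕ) : ℝ)
      - ((k+1).choose (l+2) : ℝ) / (((2*k+2).choose (l+2) : ℕ) : ℝ)
    = ((l:ℝ)+2) * ((l:ℝ)+1) / (4*(2*(k:ℝ)+3)*(2*(k:ℝ)+1))
        * ((k.choose l : ℝ) / (((2*k).choose l : ℕ) : ℝ)) := by
  rcases eq_or_lt_of_le hl with rfl | hlk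
  · -- l = k
    have e1 : (2*l+4) - (l+2) = l+2 := by omega
    have e2 : (2*l) - l = l := by omega
    rw [Nat.choose_self, Nat.choose_self,
      Nat.choose_eq_zero_of_lt (by omega : l+1 < l+2),
      Nat.cast_choose ℝ (by omega : l+2 ≤ 2*l+4), e1,
      Nat.cast_choose ℝ (by omega : l ≤ 2*l), e2]
    have g1 : ((2*l+4).factorial : ℝ)
        = (2*(l:ℝ)+4)*(2*(l:ℝ)+3)*(2*(l:ℝ)+2)*(2*(l:ℝ)+1)*((2*l).factorial : ℝ) := by
      rw [show 2*l+4 = (2*l+3)+1 from rfl, Nat.factorial_succ,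
        show 2*l+3 = (2*l+2)+1 from rfl, Nat.factorial_succ,
        show 2*l+2 = (2*l+1)+1 from rfl, Nat.factorial_succ,
        show 2*l+1 = (2*l)+1 from rfl, Nat.factorial_succ]
      push_cast; ring
    have g2 : ((l+2).factorial : ℝ) = ((l:ℝ)+2)*((l:ℝ)+1)*(l.factorial : ℝ) := by
      rw [show l+2 = (l+1)+1 from rfl, Nat.factorial_succ, Nat.factorial_succ]
      push_cast; ring
    rw [g1, g2]
    have n1 : ((l.factorial : ℕ) : ℝ) ≠ 0 := Nat.cast_ne_zero.2 l.factorial_ne_zero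
    have n2 : (((2*l).factorial : ℕ) : ℝ) ≠ 0 := Nat.cast_ne_zero.2 (2*l).factorial_ne_zero
    have n3 : (0:ℝ) < (l:ℝ)+1 := by positivity
    have n4 : (0:ℝ) < (l:ℝ)+2 := by positivity
    have n5 : (0:ℝ) < 2*(l:ℝ)+1 := by positivity
    have n6 : (0:ℝ) < 2*(l:ℝ)+3 := by positivity
    field_simp
    ring
  · -- l < k : write k = l+1+a
    obtain ⟨a, rfl⟩ : ∃ a, k = l + 1 + a := ⟨k - (l+1), by omega⟩
    simp only [show l+1+a+2 = l+a+3 from by omega, show 2*(l+1+a)+4 = 2*l+2*a+6 from by omega,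
      show l+1+a+1 = l+a+2 from by omega, show 2*(l+1+a)+2 = 2*l+2*a+4 from by omega,
      show l+1+a = l+a+1 from by omega, show 2*(l+1+a) = 2*l+2*a+2 from by omega,
      show 2*(l+a+1)+4 = 2*l+2*a+6 from by omega, show 2*(l+a+1)+2 = 2*l+2*a+4 from by omega,
      show 2*(l+a+1) = 2*l+2*a+2 from by omega, show l+a+1+1 = l+a+2 from by omega,
      show l+a+1+2 = l+a+3 from by omega]
    have e1 : (l+a+3) - (l+2) = a+1 := by omega
    have e2 : (2*l+2*a+6) - (l+2) = l+2*a+4 := by omega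
    have e3 : (l+a+2) - (l+2) = a := by omega
    have e4 : (2*l+2*a+4) - (l+2) = l+2*a+2 := by omega
    have e5 : (l+a+1) - l = a+1 := by omega
    have e6 : (2*l+2*a+2) - l = l+2*a+2 := by omega
    rw [Nat.cast_choose ℝ (by omega : l+2 ≤ l+a+3), e1,
      Nat.cast_choose ℝ (by omega : l+2 ≤ 2*l+2*a+6), e2,
      Nat.cast_choose ℝ (by omega : l+2 ≤ l+a+2), e3,
      Nat.cast_choose ℝ (by omega : l+2 ≤ 2*l+2*a+4), e4,
      Nat.cast_choose ℝ (by omega : l ≤ l+a+1), e5,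
      Nat.cast_choose ℝ (by omega : l ≤ 2*l+2*a+2), e6]
    -- factorial chains
    have g1 : ((l+2).factorial : ℝ) = ((l:ℝ)+2)*((l:ℝ)+1)*(l.factorial : ℝ) := by
      rw [show l+2 = (l+1)+1 from rfl, Nat.factorial_succ, Nat.factorial_succ]
      push_cast; ring
    have g2 : ((a+1).factorial : ℝ) = ((a:ℝ)+1)*(a.factorial : ℝ) := by
      rw [Nat.factorial_succ]; push_cast; ring
    have g3 : ((l+a+3).factorial : ℝ)
        = ((l:ℝ)+(a:ℝ)+3)*((l:ℝ)+(a:ℝ)+2)*((l+a+1).factorial : ℝ) := by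
      rw [show l+a+3 = (l+a+2)+1 from rfl, Nat.factorial_succ,
        show l+a+2 = (l+a+1)+1 from rfl, Nat.factorial_succ]
      push_cast; ring
    have g4 : ((l+a+2).factorial : ℝ) = ((l:ℝ)+(a:ℝ)+2)*((l+a+1).factorial : ℝ) := by
      rw [show l+a+2 = (l+a+1)+1 from rfl, Nat.factorial_succ]
      push_cast; ring
    have g5 : ((2*l+2*a+6).factorial : ℝ)
        = (2*(l:ℝ)+2*(a:ℝ)+6)*(2*(l:ℝ)+2*(a:ℝ)+5)*(2*(l:ℝ)+2*(a:ℝ)+4)*(2*(l:ℝ)+2*(a:ℝ)+3)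
          *((2*l+2*a+2).factorial : ℝ) := by
      rw [show 2*l+2*a+6 = (2*l+2*a+5)+1 from rfl, Nat.factorial_succ,
        show 2*l+2*a+5 = (2*l+2*a+4)+1 from rfl, Nat.factorial_succ,
        show 2*l+2*a+4 = (2*l+2*a+3)+1 from rfl, Nat.factorial_succ,
        show 2*l+2*a+3 = (2*l+2*a+2)+1 from rfl, Nat.factorial_succ]
      push_cast; ring
    have g6 : ((2*l+2*a+4).factorial : ℝ)
        = (2*(l:ℝ)+2*(a:ℝ)+4)*(2*(l:ℝ)+2*(a:ℝ)+3)*((2*l+2*a+2).factorial : ℝ) := by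
      rw [show 2*l+2*a+4 = (2*l+2*a+3)+1 from rfl, Nat.factorial_succ,
        show 2*l+2*a+3 = (2*l+2*a+2)+1 from rfl, Nat.factorial_succ]
      push_cast; ring
    have g7 : ((l+2*a+4).factorial : ℝ)
        = ((l:ℝ)+2*(a:ℝ)+4)*((l:ℝ)+2*(a:ℝ)+3)*((l+2*a+2).factorial : ℝ) := by
      rw [show l+2*a+4 = (l+2*a+3)+1 from rfl, Nat.factorial_succ,
        show l+2*a+3 = (l+2*a+2)+1 from rfl, Nat.factorial_succ]
      push_cast; ring
    rw [g1, g2, g3, g4, g5, g6, g7]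
    have n1 : ((l.factorial : ℕ) : ℝ) ≠ 0 := Nat.cast_ne_zero.2 l.factorial_ne_zero
    have n2 : ((a.factorial : ℕ) : ℝ) ≠ 0 := Nat.cast_ne_zero.2 a.factorial_ne_zero
    have n3 : (((l+a+1).factorial : ℕ) : ℝ) ≠ 0 := Nat.cast_ne_zero.2 (l+a+1).factorial_ne_zero
    have n4 : (((2*l+2*a+2).factorial : ℕ) : ℝ) ≠ 0 :=
      Nat.cast_ne_zero.2 (2*l+2*a+2).factorial_ne_zero
    have n5 : (((l+2*a+2).factorial : ℕ) : ℝ) ≠ 0 :=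
      Nat.cast_ne_zero.2 (l+2*a+2).factorial_ne_zero
    have p1 : (0:ℝ) < (l:ℝ)+1 := by positivity
    have p2 : (0:ℝ) < (l:ℝ)+2 := by positivity
    have p3 : (0:ℝ) < (a:ℝ)+1 := by positivity
    have p4 : (0:ℝ) < 2*(l:ℝ)+2*(a:ℝ)+3 := by positivity
    have p5 : (0:ℝ) < 2*(l:ℝ)+2*(a:ℝ)+4 := by positivity
    have p6 : (0:ℝ) < 2*(l:ℝ)+2*(a:ℝ)+5 := by positivity
    have p7 : (0:ℝ) < 2*(l:ℝ)+2*(a:ℝ)+6 := by positivity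
    have p8 : (0:ℝ) < (l:ℝ)+2*(a:ℝ)+3 := by positivity
    have p9 : (0:ℝ) < (l:ℝ)+2*(a:ℝ)+4 := by positivity
    push_cast
    field_simp
    ring

lemma besselQ_rec (k : ℕ) (z : ℝ) :
    besselQ (k+2) z
      = besselQ (k+1) z + z^2/((2*(k:ℝ)+3)*(2*(k:ℝ)+1)) * besselQ k z := by
  unfold besselQ
  rw [Finset.mul_sum]
  simp only [show 2*(k+2) = 2*k+4 from by omega, show 2*(k+1) = 2*k+2 from by omega,
    show k+2+1 = k+3 from by omega, show k+1+1 = k+2 from by omega]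
  rw [← sub_eq_iff_eq_add']
  have hext : ∑ l ∈ Finset.range (k+2),
        (((k+1).choose l : ℝ) / (((2*k+2).choose l : ℕ) : ℝ)) * (2*z)^l / (l.factorial : ℝ)
      = ∑ l ∈ Finset.range (k+3),
        (((k+1).choose l : ℝ) / (((2*k+2).choose l : ℕ) : ℝ)) * (2*z)^l / (l.factorial : ℝ) := by
    rw [show k+3 = (k+2)+1 from rfl, Finset.sum_range_succ (n := k+2)]
    rw [Nat.choose_eq_zero_of_lt (by omega : k+1 < k+2)]
    norm_num
  rw [hext, ← Finset.sum_sub_distrib]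
  rw [show k+3 = (k+2)+1 from rfl, Finset.sum_range_succ']
  rw [show k+2 = (k+1)+1 from rfl, Finset.sum_range_succ']
  have h0 : (((k+1+1).choose 0 : ℝ) / (((2*k+4).choose 0 : ℕ) : ℝ)) * (2*z)^0
        / ((Nat.factorial 0 : ℕ) : ℝ)
      - (((k+1).choose 0 : ℝ) / (((2*k+2).choose 0 : ℕ) : ℝ)) * (2*z)^0
        / ((Nat.factorial 0 : ℕ) : ℝ) = 0 := by
    simp
  have h1 : (((k+1+1).choose (0+1) : ℝ) / (((2*k+4).choose (0+1) : ℕ) : ℝ)) * (2*z)^(0+1)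
        / ((Nat.factorial (0+1) : ℕ) : ℝ)
      - (((k+1).choose (0+1) : ℝ) / (((2*k+2).choose (0+1) : ℕ) : ℝ)) * (2*z)^(0+1)
        / ((Nat.factorial (0+1) : ℕ) : ℝ) = 0 := by
    simp only [show (0:ℕ)+1 = 1 from rfl, Nat.choose_one_right]
    rw [show (((k+1+1 : ℕ)) : ℝ) = (k:ℝ)+2 from by push_cast; ring]
    have c1 : (((2*k+4 : ℕ)) : ℝ) = 2*(k:ℝ)+4 := by push_cast; ring
    have c2 : (((2*k+2 : ℕ)) : ℝ) = 2*(k:ℝ)+2 := by push_cast; ring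
    rw [c1, c2]
    have d1 : (2*(k:ℝ)+4) ≠ 0 := by positivity
    have d2 : (2*(k:ℝ)+2) ≠ 0 := by positivity
    push_cast
    field_simp
    ring
  rw [h0, h1, add_zero, add_zero]
  apply Finset.sum_congr rfl
  intro i hi
  have hik : i ≤ k := by
    have := Finset.mem_range.1 hi; omega
  have key := coeff_id k i hik
  have hfac : (((i+1+1).factorial : ℕ) : ℝ) = ((i:ℝ)+2)*((i:ℝ)+1)*((i.factorial : ℕ) : ℝ) := by
    rw [Nat.factorial_succ, Nat.factorial_succ]
    push_cast; ring
  have hpow : (2*z)^(i+1+1) = (2*z)^i * (4*z^2) := by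
    rw [pow_add]; ring
  have expand : ∀ X : ℝ, X * (2*z)^(i+1+1) / (((i+1+1).factorial : ℕ) : ℝ)
      = X * ((2*z)^i * (4*z^2) / (((i:ℝ)+2)*((i:ℝ)+1)*((i.factorial : ℕ) : ℝ))) := by
    intro X
    rw [hfac, hpow]; ring
  rw [expand, expand, ← sub_mul]
  rw [show i+1+1 = i+2 from rfl] at key ⊢
  rw [key]
  have n1 : ((i.factorial : ℕ) : ℝ) ≠ 0 := Nat.cast_ne_zero.2 i.factorial_ne_zero
  have nC : (((2*k).choose i : ℕ) : ℝ) ≠ 0 :=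
    Nat.cast_ne_zero.2 (Nat.choose_pos (by omega : i ≤ 2*k)).ne' 
  have p1 : (0:ℝ) < (i:ℝ)+1 := by positivity
  have p2 : (0:ℝ) < (i:ℝ)+2 := by positivity
  have p3 : (0:ℝ) < 2*(k:ℝ)+1 := by positivity
  have p4 : (0:ℝ) < 2*(k:ℝ)+3 := by positivity
  field_simp

lemma besselK_eq (ν z : ℝ) : besselK ν z = (1/2) * ∫ t in Set.Ioi (0:ℝ), bF ν z t := rfl

lemma besselK_symm (ν z : ℝ) : besselK (-ν) z = besselK ν z := by
  rw [besselK_eq, besselK_eq, bF_int_symm]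

lemma besselK_rec (ν : ℝ) {z : ℝ} (hz : 0 < z) :
    besselK (ν+1) z = besselK (ν-1) z + (2*ν/z) * besselK ν z := by
  rw [besselK_eq, besselK_eq, besselK_eq, bF_int_rec ν hz]
  ring

lemma besselK_half {z : ℝ} (hz : 0 < z) :
    besselK (1/2) z = Real.sqrt (π / (2*z)) * Real.exp (-z) := by
  rw [besselK_eq, bF_int_half hz]
  have h4 : Real.sqrt (4:ℝ) = 2 := by
    rw [show (4:ℝ) = 2^2 by norm_num, Real.sqrt_sq (by norm_num)]
  rw [show π / (2*z) = (2*π/z) / 4 by ring, Real.sqrt_div (by positivity) 4, h4]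
  ring

theorem stmt_7 (k : ℕ) (z : ℝ) (hz : 0 < z) :
    Real.exp (-z) * besselQ k z =
      (2 : ℝ) ^ ((1 : ℝ) / 2 - k) / Real.Gamma ((k : ℝ) + 1 / 2) *
        z ^ ((k : ℝ) + 1 / 2) * besselK ((k : ℝ) + 1 / 2) z := by
  have hsz : (0:ℝ) < Real.sqrt z := Real.sqrt_pos.2 hz
  have hsπ : (0:ℝ) < Real.sqrt π := Real.sqrt_pos.2 pi_pos
  have hs2 : (0:ℝ) < Real.sqrt 2 := by positivity
  induction k using Nat.twoStepInduction with
  | zero =>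
    -- k = 0
    have hQ : besselQ 0 z = 1 := by
      unfold besselQ; simp
    rw [hQ, mul_one]
    norm_num
    rw [Real.Gamma_one_half_eq, besselK_half hz]
    rw [Real.sqrt_div (by positivity : (0:ℝ) ≤ π), Real.sqrt_mul (by norm_num : (0:ℝ) ≤ 2)]
    rw [← Real.sqrt_eq_rpow, ← Real.sqrt_eq_rpow]
    field_simp
  | one =>
    have hQ : besselQ 1 z = 1 + z := by
      unfold besselQ
      rw [Finset.sum_range_succ, Finset.sum_range_succ, Finset.sum_range_zero]
      norm_num
      ring
    have hK32 : besselK (3/2 : ℝ) z = (1 + 1/z) * besselK (1/2) z := by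
      have h := besselK_rec (1/2) hz
      rw [show (1:ℝ)/2 + 1 = 3/2 by norm_num, show (1:ℝ)/2 - 1 = -(1/2) by norm_num,
        show (-((1:ℝ)/2)) = -(1/2 : ℝ) from rfl] at h
      rw [besselK_symm (1/2) z] at h
      rw [h]; ring
    have hΓ : Real.Gamma ((3:ℝ)/2) = (1/2) * Real.sqrt π := by
      rw [show (3:ℝ)/2 = 1/2 + 1 by norm_num, Real.Gamma_add_one (by norm_num),
        Real.Gamma_one_half_eq]
    have hzp : z ^ ((3:ℝ)/2) = z * Real.sqrt z := by
      rw [show (3:ℝ)/2 = 1 + 1/2 by norm_num, Real.rpow_add hz, Real.rpow_one,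
        ← Real.sqrt_eq_rpow]
    have h2p : (2:ℝ) ^ ((1:ℝ)/2 - 1) = Real.sqrt 2 / 2 := by
      rw [show (1:ℝ)/2 - 1 = 1/2 + (-1) by ring, Real.rpow_add two_pos, Real.rpow_neg_one,
        ← Real.sqrt_eq_rpow]
      ring
    push_cast
    rw [show ((1:ℝ) + 1/2) = 3/2 by norm_num, show ((1:ℝ)/2 - 1) = 1/2 - 1 from rfl]
    rw [hQ, hK32, besselK_half hz, hΓ, hzp, h2p,
      Real.sqrt_div (by positivity : (0:ℝ) ≤ π), Real.sqrt_mul (by norm_num : (0:ℝ) ≤ 2)]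
    have m2 : Real.sqrt 2 * Real.sqrt 2 = 2 := Real.mul_self_sqrt (by norm_num)
    have mz : Real.sqrt z * Real.sqrt z = z := Real.mul_self_sqrt hz.le
    field_simp
    nlinarith [Real.exp_pos (-z), mul_pos hsz hs2, mul_pos hsπ hsz]
  | more n ih1 ih2 =>
    have hrec := besselK_rec ((n:ℝ) + 3/2) hz
    rw [show (n:ℝ) + 3/2 + 1 = ((n:ℝ)+2) + 1/2 by ring,
      show (n:ℝ) + 3/2 - 1 = (n:ℝ) + 1/2 by ring,
      show (n:ℝ) + 3/2 = ((n:ℝ)+1) + 1/2 by ring] at hrec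
    have hΓpos : 0 < Real.Gamma ((n:ℝ)+1/2) := Real.Gamma_pos_of_pos (by positivity)
    have hΓ1 : Real.Gamma (((n:ℝ)+1) + 1/2) = ((n:ℝ)+1/2) * Real.Gamma ((n:ℝ)+1/2) := by
      rw [show ((n:ℝ)+1) + 1/2 = ((n:ℝ)+1/2) + 1 by ring,
        Real.Gamma_add_one (by positivity : ((n:ℝ)+1/2) ≠ 0)]
    have hΓ2 : Real.Gamma (((n:ℝ)+2) + 1/2)
        = (((n:ℝ)+1)+1/2) * (((n:ℝ)+1/2) * Real.Gamma ((n:ℝ)+1/2)) := by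
      rw [show ((n:ℝ)+2) + 1/2 = ((((n:ℝ)+1))+1/2) + 1 by ring,
        Real.Gamma_add_one (by positivity : (((n:ℝ)+1)+1/2) ≠ 0), hΓ1]
    have hz1 : z ^ (((n:ℝ)+1) + 1/2) = z * z ^ ((n:ℝ) + 1/2) := by
      rw [show ((n:ℝ)+1) + 1/2 = 1 + ((n:ℝ)+1/2) by ring, Real.rpow_add hz, Real.rpow_one]
    have hz2 : z ^ (((n:ℝ)+2) + 1/2) = z^2 * z ^ ((n:ℝ) + 1/2) := by
      rw [show ((n:ℝ)+2) + 1/2 = ((2:ℕ):ℝ) + ((n:ℝ)+1/2) by push_cast; ring,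
        Real.rpow_add hz, Real.rpow_natCast]
    have h21 : (2:ℝ) ^ ((1:ℝ)/2 - ((n:ℝ)+1)) = (2:ℝ) ^ ((1:ℝ)/2 - (n:ℝ)) / 2 := by
      rw [show (1:ℝ)/2 - ((n:ℝ)+1) = ((1:ℝ)/2 - (n:ℝ)) + (-1) by ring,
        Real.rpow_add two_pos, Real.rpow_neg_one]
      ring
    have h22 : (2:ℝ) ^ ((1:ℝ)/2 - ((n:ℝ)+2)) = (2:ℝ) ^ ((1:ℝ)/2 - (n:ℝ)) / 4 := by
      rw [show (1:ℝ)/2 - ((n:ℝ)+2) = ((1:ℝ)/2 - (n:ℝ)) + (-((2:ℕ):ℝ)) by push_cast; ring,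
        Real.rpow_add two_pos, Real.rpow_neg (by norm_num : (0:ℝ) ≤ 2), Real.rpow_natCast]
      norm_num
      ring
    have hq := besselQ_rec n z
    push_cast at ih1 ih2 ⊢
    calc Real.exp (-z) * besselQ (n+2) z
        = Real.exp (-z) * besselQ (n+1) z
          + z^2/((2*(n:ℝ)+3)*(2*(n:ℝ)+1)) * (Real.exp (-z) * besselQ n z) := by
          rw [hq]; ring
      _ = (2:ℝ)^((1:ℝ)/2 - ((n:ℝ)+1))/Real.Gamma (((n:ℝ)+1)+1/2) * z^(((n:ℝ)+1)+1/2)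
            * besselK (((n:ℝ)+1)+1/2) z
          + z^2/((2*(n:ℝ)+3)*(2*(n:ℝ)+1)) * ((2:ℝ)^((1:ℝ)/2 - (n:ℝ))/Real.Gamma ((n:ℝ)+1/2)
            * z^((n:ℝ)+1/2) * besselK ((n:ℝ)+1/2) z) := by
          rw [ih1, ih2]
      _ = (2:ℝ)^((1:ℝ)/2 - ((n:ℝ)+2))/Real.Gamma (((n:ℝ)+2)+1/2) * z^(((n:ℝ)+2)+1/2)
            * besselK (((n:ℝ)+2)+1/2) z := by
          rw [hrec, hΓ1, hΓ2, hz1, hz2, h21, h22]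
          have d1 : ((n:ℝ)+1/2) ≠ 0 := by positivity
          have d2 : (((n:ℝ)+1)+1/2) ≠ 0 := by positivity
          have d3 : Real.Gamma ((n:ℝ)+1/2) ≠ 0 := hΓpos.ne'
          field_simp
          ring
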